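/- arXiv:2106.05041 — 10 statements merged into one kernel-verified Lean document; each statement's English description precedes it below -/
import Mathlib

section
/- The fPCL operators ⊕, ⊗ and ⊎ are associative and commutative up to fPCL-equivalence; in particular, for all fPCL formulas ζ₁, ζ₂, ζ₃ over a finite set of ports P, ζ₁ ⊎ (ζ₂ ⊎ ζ₃) ≡ (ζ₁ ⊎ ζ₂) ⊎ ζ₃ and ζ₁ ⊎ ζ₂ ≡ ζ₂ ⊎ ζ₁. -/
/-- A De Morgan algebra: a bounded distributive lattice equipped with a
complement map satisfying involution and the De Morgan laws. -/
class DeMorganAlg (K : Type) extends DistribLattice K, BoundedOrder K where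
  compl : K → K
  compl_compl : ∀ k : K, compl (compl k) = k
  compl_sup : ∀ k k' : K, compl (k ⊔ k') = compl k ⊓ compl k'
  compl_inf : ∀ k k' : K, compl (k ⊓ k') = compl k ⊔ compl k'

/-- fPIL formulas over the set of ports `P`. -/
inductive fPIL (P : Type) : Type where
  | tt : fPIL P
  | port : P → fPIL P
  | fnot : fPIL P → fPIL P
  | fdisj : fPIL P → fPIL P → fPIL P

/-- Fuzzy conjunction of fPIL formulas. -/
def fPIL.fconj {P : Type} (φ₁ φ₂ : fPIL P) : fPIL P :=
  .fnot (.fdisj (.fnot φ₁) (.fnot φ₂))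

/-- The fPIL formula `false`. -/
def fPIL.ff {P : Type} : fPIL P := .fnot .tt

/-- K-fuzzy interactions on `P`: maps `a : P → K` with `a p ≠ 0` for some port `p`. -/
def fI (P K : Type) [DeMorganAlg K] : Type := {a : P → K // ∃ p : P, a p ≠ ⊥}

/-- Semantics of fPIL formulas. -/
def fPIL.sem {P K : Type} [DeMorganAlg K] : fPIL P → fI P K → K
  | .tt, _ => ⊤
  | .port p, a => a.1 p
  | .fnot φ, a => DeMorganAlg.compl (φ.sem a)
  | .fdisj φ₁ φ₂, a => φ₁.sem a ⊔ φ₂.sem a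

/-- Equivalence of fPIL formulas: equal semantics over every De Morgan algebra
and every fuzzy interaction. -/
def pilEquiv {P : Type} (φ₁ φ₂ : fPIL P) : Prop :=
  ∀ (K : Type) [DeMorganAlg K] (a : fI P K), φ₁.sem a = φ₂.sem a
noncomputable instance {P K : Type} [DeMorganAlg K] : DecidableEq (fI P K) :=
  Classical.decEq _

/-- fPCL formulas over the set of ports `P`. -/
inductive fPCL (P : Type) : Type where
  | pil : fPIL P → fPCL P
  | cneg : fPCL P → fPCL P
  | oplus : fPCL P → fPCL P → fPCL P
  | coal : fPCL P → fPCL P → fPCL P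

/-- Fuzzy conjunction `⊗` of fPCL formulas. -/
def fPCL.otimes {P : Type} (ζ₁ ζ₂ : fPCL P) : fPCL P :=
  .cneg (.oplus (.cneg ζ₁) (.cneg ζ₂))

/-- The closure operator `~ζ := ζ ⊎ true`. -/
def fPCL.closure {P : Type} (ζ : fPCL P) : fPCL P := .coal ζ (.pil .tt)

/-- Semantics of fPCL formulas on finite sets of fuzzy interactions. -/
noncomputable def fPCL.sem {P K : Type} [DeMorganAlg K] :
    fPCL P → Finset (fI P K) → K
  | .pil φ, γ => γ.inf fun a => φ.sem a
  | .cneg ζ, γ => DeMorganAlg.compl (ζ.sem γ)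
  | .oplus ζ₁ ζ₂, γ => ζ₁.sem γ ⊔ ζ₂.sem γ
  | .coal ζ₁ ζ₂, γ =>
      ((γ.powerset ×ˢ γ.powerset).filter fun q =>
          q.1.Nonempty ∧ q.2.Nonempty ∧ q.1 ∪ q.2 = γ).sup fun q =>
        ζ₁.sem q.1 ⊓ ζ₂.sem q.2

/-- Equivalence of fPCL formulas: equal semantics over every De Morgan algebra
and every nonempty finite set of fuzzy interactions. -/
def pclEquiv {P : Type} (ζ₁ ζ₂ : fPCL P) : Prop :=
  ∀ (K : Type) [DeMorganAlg K] (γ : Finset (fI P K)), γ.Nonempty →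
    ζ₁.sem γ = ζ₂.sem γ
lemma coal_sem_def {P K : Type} [DeMorganAlg K] (ζ₁ ζ₂ : fPCL P)
    (γ : Finset (fI P K)) :
    (fPCL.coal ζ₁ ζ₂).sem γ =
      ((γ.powerset ×ˢ γ.powerset).filter fun q =>
          q.1.Nonempty ∧ q.2.Nonempty ∧ q.1 ∪ q.2 = γ).sup (fun q =>
        ζ₁.sem q.1 ⊓ ζ₂.sem q.2) := rfl

lemma coal_le {P K : Type} [DeMorganAlg K] (ζ₁ ζ₂ : fPCL P)
    (γ₁ γ₂ : Finset (fI P K)) (h₁ : γ₁.Nonempty) (h₂ : γ₂.Nonempty) :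
    ζ₁.sem γ₁ ⊓ ζ₂.sem γ₂ ≤ (fPCL.coal ζ₁ ζ₂).sem (γ₁ ∪ γ₂) := by
  rw [coal_sem_def]
  refine Finset.le_sup (f := fun q => ζ₁.sem q.1 ⊓ ζ₂.sem q.2) (b := (γ₁, γ₂)) ?_
  simp only [Finset.mem_filter, Finset.mem_product, Finset.mem_powerset]
  exact ⟨⟨Finset.subset_union_left, Finset.subset_union_right⟩, h₁, h₂, trivial⟩

lemma coal_sup_le {P K : Type} [DeMorganAlg K] {ζ₁ ζ₂ : fPCL P}
    {γ : Finset (fI P K)} {c : K}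
    (h : ∀ γ₁ γ₂ : Finset (fI P K), γ₁.Nonempty → γ₂.Nonempty → γ₁ ∪ γ₂ = γ →
      ζ₁.sem γ₁ ⊓ ζ₂.sem γ₂ ≤ c) :
    (fPCL.coal ζ₁ ζ₂).sem γ ≤ c := by
  rw [coal_sem_def]
  refine Finset.sup_le fun q hq => ?_
  simp only [Finset.mem_filter, Finset.mem_product, Finset.mem_powerset] at hq
  exact h q.1 q.2 hq.2.1 hq.2.2.1 hq.2.2.2

lemma otimes_sem {P K : Type} [DeMorganAlg K] (ζ₁ ζ₂ : fPCL P)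
    (γ : Finset (fI P K)) :
    (ζ₁.otimes ζ₂).sem γ = ζ₁.sem γ ⊓ ζ₂.sem γ := by
  simp [fPCL.otimes, fPCL.sem, DeMorganAlg.compl_sup, DeMorganAlg.compl_compl]

lemma coal_comm_sem {P K : Type} [DeMorganAlg K] (ζ₁ ζ₂ : fPCL P)
    (γ : Finset (fI P K)) :
    (fPCL.coal ζ₁ ζ₂).sem γ = (fPCL.coal ζ₂ ζ₁).sem γ := by
  have key : ∀ (ξ₁ ξ₂ : fPCL P) (δ : Finset (fI P K)),
      (fPCL.coal ξ₁ ξ₂).sem δ ≤ (fPCL.coal ξ₂ ξ₁).sem δ := by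
    intro ξ₁ ξ₂ δ
    refine coal_sup_le fun γ₁ γ₂ h₁ h₂ hu => ?_
    rw [inf_comm]
    calc ξ₂.sem γ₂ ⊓ ξ₁.sem γ₁ ≤ (fPCL.coal ξ₂ ξ₁).sem (γ₂ ∪ γ₁) :=
          coal_le _ _ _ _ h₂ h₁
      _ = (fPCL.coal ξ₂ ξ₁).sem δ := by rw [Finset.union_comm, hu]
  exact le_antisymm (key _ _ _) (key _ _ _)

lemma coal_assoc_sem {P K : Type} [DeMorganAlg K] (ζ₁ ζ₂ ζ₃ : fPCL P)
    (γ : Finset (fI P K)) :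
    (fPCL.coal ζ₁ (fPCL.coal ζ₂ ζ₃)).sem γ
      = (fPCL.coal (fPCL.coal ζ₁ ζ₂) ζ₃).sem γ := by
  refine le_antisymm ?_ ?_
  · refine coal_sup_le fun γ₁ δ h₁ hδ hu => ?_
    rw [coal_sem_def ζ₂ ζ₃, Finset.sup_inf_distrib_left]
    refine Finset.sup_le fun q hq => ?_
    simp only [Finset.mem_filter, Finset.mem_product, Finset.mem_powerset] at hq
    obtain ⟨_, h₂, h₃, hu'⟩ := hq
    rw [← inf_assoc]
    calc ζ₁.sem γ₁ ⊓ ζ₂.sem q.1 ⊓ ζ₃.sem q.2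
        ≤ (fPCL.coal ζ₁ ζ₂).sem (γ₁ ∪ q.1) ⊓ ζ₃.sem q.2 :=
          inf_le_inf_right _ (coal_le _ _ _ _ h₁ h₂)
      _ ≤ (fPCL.coal (fPCL.coal ζ₁ ζ₂) ζ₃).sem ((γ₁ ∪ q.1) ∪ q.2) :=
          coal_le _ _ _ _ (h₁.mono Finset.subset_union_left) h₃
      _ = _ := by rw [Finset.union_assoc, hu', hu]
  · refine coal_sup_le fun δ γ₃ hδ h₃ hu => ?_
    rw [coal_sem_def ζ₁ ζ₂, Finset.sup_inf_distrib_right]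
    refine Finset.sup_le fun q hq => ?_
    simp only [Finset.mem_filter, Finset.mem_product, Finset.mem_powerset] at hq
    obtain ⟨_, h₁, h₂, hu'⟩ := hq
    rw [inf_assoc]
    calc ζ₁.sem q.1 ⊓ (ζ₂.sem q.2 ⊓ ζ₃.sem γ₃)
        ≤ ζ₁.sem q.1 ⊓ (fPCL.coal ζ₂ ζ₃).sem (q.2 ∪ γ₃) :=
          inf_le_inf_left _ (coal_le _ _ _ _ h₂ h₃)
      _ ≤ (fPCL.coal ζ₁ (fPCL.coal ζ₂ ζ₃)).sem (q.1 ∪ (q.2 ∪ γ₃)) :=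
          coal_le _ _ _ _ h₁ (h₂.mono Finset.subset_union_left)
      _ = _ := by rw [← Finset.union_assoc, hu', hu]

/-- the fPCL operators `⊕`, `⊗` and `⊎` are associative and
commutative up to fPCL-equivalence. -/
theorem fpcl_assoc_comm {P : Type} [Fintype P] (ζ₁ ζ₂ ζ₃ : fPCL P) :
    pclEquiv (.oplus ζ₁ (.oplus ζ₂ ζ₃)) (.oplus (.oplus ζ₁ ζ₂) ζ₃) ∧
    pclEquiv (.oplus ζ₁ ζ₂) (.oplus ζ₂ ζ₁) ∧
    pclEquiv (ζ₁.otimes (ζ₂.otimes ζ₃)) ((ζ₁.otimes ζ₂).otimes ζ₃) ∧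
    pclEquiv (ζ₁.otimes ζ₂) (ζ₂.otimes ζ₁) ∧
    pclEquiv (.coal ζ₁ (.coal ζ₂ ζ₃)) (.coal (.coal ζ₁ ζ₂) ζ₃) ∧
    pclEquiv (.coal ζ₁ ζ₂) (.coal ζ₂ ζ₁) := by
  refine ⟨?_, ?_, ?_, ?_, ?_, ?_⟩
  · intro K _ γ _; simp [fPCL.sem, sup_assoc]
  · intro K _ γ _; simp [fPCL.sem, sup_comm]
  · intro K _ γ _; simp [otimes_sem, inf_assoc]
  · intro K _ γ _; simp [otimes_sem, inf_comm]
  · intro K _ γ _; exact coal_assoc_sem ζ₁ ζ₂ ζ₃ γ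
  · intro K _ γ _; exact coal_comm_sem ζ₁ ζ₂ γ
end

section
/- For every fPCL formula ζ over a finite set of ports P, every De Morgan algebra K, and every γ ∈ fC(P,K), the closure operator satisfies ‖~ζ‖(γ) = ⋁_{γ' ⊆ γ, γ' nonempty} ‖ζ‖(γ'). -/
/-- the closure operator satisfies
`‖~ζ‖(γ) = ⋁_{γ' ⊆ γ, γ' nonempty} ‖ζ‖(γ')`. -/
theorem fpcl_closure_sem {P : Type} [Fintype P] (ζ : fPCL P)
    (K : Type) [DeMorganAlg K] (γ : Finset (fI P K)) (hγ : γ.Nonempty) :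
    (fPCL.sem ζ.closure γ) =
      (γ.powerset.filter fun γ' => γ'.Nonempty).sup fun γ' => ζ.sem γ' := by
  have htop : ∀ δ : Finset (fI P K), fPCL.sem (.pil .tt) δ = (⊤ : K) := by
    intro δ
    show (δ.inf fun a => fPIL.sem .tt a) = ⊤
    exact (Finset.inf_eq_top_iff _ _).2 fun a _ => rfl
  show (((γ.powerset ×ˢ γ.powerset).filter fun q =>
      q.1.Nonempty ∧ q.2.Nonempty ∧ q.1 ∪ q.2 = γ).sup fun q =>
        ζ.sem q.1 ⊓ fPCL.sem (.pil .tt) q.2) = _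
  apply le_antisymm
  · apply Finset.sup_le
    intro q hq
    simp only [Finset.mem_filter, Finset.mem_product, Finset.mem_powerset] at hq
    refine le_trans inf_le_left (Finset.le_sup ?_)
    simp only [Finset.mem_filter, Finset.mem_powerset]
    exact ⟨hq.1.1, hq.2.1⟩
  · apply Finset.sup_le
    intro γ' hγ'
    simp only [Finset.mem_filter, Finset.mem_powerset] at hγ'
    have hmem : (γ', γ) ∈ (γ.powerset ×ˢ γ.powerset).filter fun q =>
        q.1.Nonempty ∧ q.2.Nonempty ∧ q.1 ∪ q.2 = γ := by
      simp only [Finset.mem_filter, Finset.mem_product, Finset.mem_powerset]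
      exact ⟨⟨hγ'.1, le_refl γ⟩, hγ'.2, hγ, Finset.union_eq_right.2 hγ'.1⟩
    have := Finset.le_sup (f := fun q : Finset (fI P K) × Finset (fI P K) =>
      ζ.sem q.1 ⊓ fPCL.sem (.pil .tt) q.2) hmem
    simpa [htop] using this
end

section
/- For all fPCL formulas ζ, ζ₁, ζ₂ over a finite set of ports P, the coalescing operator distributes over fuzzy disjunction: ζ ⊎ (ζ₁ ⊕ ζ₂) ≡ (ζ ⊎ ζ₁) ⊕ (ζ ⊎ ζ₂). -/
/-- the coalescing operator distributes over fuzzy disjunction: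
`ζ ⊎ (ζ₁ ⊕ ζ₂) ≡ (ζ ⊎ ζ₁) ⊕ (ζ ⊎ ζ₂)`. -/
theorem fpcl_coal_distrib_oplus {P : Type} [Fintype P] (ζ ζ₁ ζ₂ : fPCL P) :
    pclEquiv (.coal ζ (.oplus ζ₁ ζ₂)) (.oplus (.coal ζ ζ₁) (.coal ζ ζ₂)) := by
  intro K _ γ _
  simp only [fPCL.sem, inf_sup_left]
  exact Finset.sup_sup ..
end

section
/- For every fPIL formula φ and all fPCL formulas ζ₁, ζ₂ over a finite set of ports P, the fuzzy conjunction with φ distributes over the coalescing operator: φ ⊗ (ζ₁ ⊎ ζ₂) ≡ (φ ⊗ ζ₁) ⊎ (φ ⊗ ζ₂). -/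
/-- for an fPIL formula `φ`, fuzzy conjunction with `φ` distributes
over the coalescing operator: `φ ⊗ (ζ₁ ⊎ ζ₂) ≡ (φ ⊗ ζ₁) ⊎ (φ ⊗ ζ₂)`. -/
theorem fpil_otimes_distrib_coal {P : Type} [Fintype P] (φ : fPIL P) (ζ₁ ζ₂ : fPCL P) :
    pclEquiv ((fPCL.pil φ).otimes (.coal ζ₁ ζ₂))
      (.coal ((fPCL.pil φ).otimes ζ₁) ((fPCL.pil φ).otimes ζ₂)) := by
  intro K _ γ hγ
  have hot : ∀ (ζ : fPCL P) (δ : Finset (fI P K)),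
      ((fPCL.pil φ).otimes ζ).sem δ = (δ.inf fun a => φ.sem a) ⊓ ζ.sem δ := by
    intro ζ δ
    simp [fPCL.otimes, fPCL.sem, DeMorganAlg.compl_sup, DeMorganAlg.compl_compl]
  rw [hot]
  show _ ⊓ (fPCL.coal ζ₁ ζ₂).sem γ = (fPCL.coal _ _).sem γ
  simp only [fPCL.sem]
  rw [Finset.sup_inf_distrib_left]
  refine Finset.sup_congr rfl ?_
  intro q hq
  simp only [Finset.mem_filter] at hq
  obtain ⟨-, -, -, hu⟩ := hq
  rw [hot, hot]
  have : γ.inf (fun a => φ.sem a) = q.1.inf (fun a => φ.sem a) ⊓ q.2.inf (fun a => φ.sem a) := by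
    rw [← hu, Finset.inf_union]
  rw [this]
  ac_rfl
end

section
/- For every fPIL formula φ over a finite set of ports P, the coalescing operator is idempotent on fPIL formulas: φ ⊎ φ ≡ φ as fPCL formulas. -/
/-- the coalescing operator is idempotent on fPIL formulas:
`φ ⊎ φ ≡ φ` as fPCL formulas. -/
theorem fpil_coal_idem {P : Type} [Fintype P] (φ : fPIL P) :
    pclEquiv (.coal (.pil φ) (.pil φ)) (.pil φ) := by
  intro K _ γ hγ
  show (((γ.powerset ×ˢ γ.powerset).filter fun q =>
      q.1.Nonempty ∧ q.2.Nonempty ∧ q.1 ∪ q.2 = γ).sup fun q =>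
        (fPCL.pil φ).sem q.1 ⊓ (fPCL.pil φ).sem q.2) = (fPCL.pil φ).sem γ
  apply le_antisymm
  · apply Finset.sup_le
    intro q hq
    simp only [Finset.mem_filter, Finset.mem_product, Finset.mem_powerset] at hq
    obtain ⟨⟨h1, h2⟩, _, _, hu⟩ := hq
    show (q.1.inf fun a => φ.sem a) ⊓ (q.2.inf fun a => φ.sem a) ≤
      γ.inf fun a => φ.sem a
    rw [← Finset.inf_union, hu]
  · have hmem : (γ, γ) ∈ (γ.powerset ×ˢ γ.powerset).filter fun q =>
        q.1.Nonempty ∧ q.2.Nonempty ∧ q.1 ∪ q.2 = γ := by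
      simp [hγ, Finset.mem_powerset]
    calc (fPCL.pil φ).sem γ = (fPCL.pil φ).sem γ ⊓ (fPCL.pil φ).sem γ := (inf_idem _).symm
      _ ≤ _ := Finset.le_sup (f := fun q => (fPCL.pil φ).sem q.1 ⊓ (fPCL.pil φ).sem q.2) hmem
end

section
/- For every fPIL formula φ over a finite set of ports P, the fPCL negation of the closure of φ coincides with the fPIL negation of φ: ¬~φ ≡ !φ as fPCL formulas; equivalently, for every De Morgan algebra K and every γ ∈ fC(P,K), the complement of ⋁_{γ'⊆γ, γ' nonempty} ⋀_{a∈γ'} ‖φ‖(a) equals ⋀_{a∈γ} of the complement of ‖φ‖(a). -/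
lemma DMA.compl_le {K : Type} [DeMorganAlg K] {x y : K} (h : x ≤ y) :
    DeMorganAlg.compl y ≤ DeMorganAlg.compl x := by
  have h2 := DeMorganAlg.compl_sup x y
  rw [sup_eq_right.mpr h] at h2
  rw [h2]; exact inf_le_left

lemma DMA.compl_bot {K : Type} [DeMorganAlg K] :
    DeMorganAlg.compl (⊥ : K) = ⊤ := by
  apply le_antisymm le_top
  have := DMA.compl_le (bot_le : (⊥ : K) ≤ DeMorganAlg.compl ⊤)
  rwa [DeMorganAlg.compl_compl] at this

lemma DMA.compl_finset_sup {K α : Type} [DeMorganAlg K] (s : Finset α) (f : α → K) :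
    DeMorganAlg.compl (s.sup f) = s.inf fun a => DeMorganAlg.compl (f a) := by
  classical
  induction s using Finset.induction with
  | empty => simp [DMA.compl_bot]
  | insert _ _ h ih => simp [Finset.sup_insert, Finset.inf_insert, DeMorganAlg.compl_sup, ih]

lemma DMA.sup_inf_powerset {K α : Type} [DeMorganAlg K] [DecidableEq α]
    (γ : Finset α) (f : α → K) :
    ((γ.powerset.filter fun γ' => γ'.Nonempty).sup fun γ' => γ'.inf f) = γ.sup f := by
  apply le_antisymm
  · apply Finset.sup_le
    intro γ' hγ'
    simp only [Finset.mem_filter, Finset.mem_powerset] at hγ'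
    obtain ⟨hsub, a, ha⟩ := hγ'
    exact le_trans (Finset.inf_le ha) (Finset.le_sup (hsub ha))
  · apply Finset.sup_le
    intro a ha
    have h1 : f a = ({a} : Finset α).inf f := by simp
    rw [h1]
    exact Finset.le_sup (Finset.mem_filter.mpr
      ⟨Finset.mem_powerset.mpr (Finset.singleton_subset_iff.mpr ha),
        Finset.singleton_nonempty a⟩)

/-- `¬~φ ≡ !φ` as fPCL formulas; equivalently, for every De Morgan
algebra `K` and every `γ ∈ fC(P,K)`, the complement of
`⋁_{γ'⊆γ, γ' nonempty} ⋀_{a∈γ'} ‖φ‖(a)` equals `⋀_{a∈γ}` of the complement of `‖φ‖(a)`. -/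
theorem fpcl_neg_closure {P : Type} [Fintype P] (φ : fPIL P) :
    pclEquiv (.cneg (fPCL.closure (.pil φ))) (.pil (.fnot φ)) ∧
    (∀ (K : Type) [DeMorganAlg K] (γ : Finset (fI P K)), γ.Nonempty →
      DeMorganAlg.compl
          ((γ.powerset.filter fun γ' => γ'.Nonempty).sup fun γ' =>
            γ'.inf fun a => φ.sem a) =
        γ.inf fun a => DeMorganAlg.compl (φ.sem a)) := by
  constructor
  · intro K _ γ hγ
    show DeMorganAlg.compl _ = γ.inf fun a => DeMorganAlg.compl (φ.sem a)
    rw [← DMA.compl_finset_sup]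
    congr 1
    show ((γ.powerset ×ˢ γ.powerset).filter fun q =>
          q.1.Nonempty ∧ q.2.Nonempty ∧ q.1 ∪ q.2 = γ).sup
        (fun q => (q.1.inf fun a => φ.sem a) ⊓ (q.2.inf fun a => fPIL.sem .tt a))
        = γ.sup fun a => φ.sem a
    apply le_antisymm
    · apply Finset.sup_le
      intro q hq
      simp only [Finset.mem_filter, Finset.mem_product, Finset.mem_powerset] at hq
      obtain ⟨⟨hsub, -⟩, ⟨a, ha⟩, -, -⟩ := hq
      exact le_trans inf_le_left (le_trans (Finset.inf_le ha) (Finset.le_sup (hsub ha)))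
    · apply Finset.sup_le
      intro a ha
      have hmem : (({a} : Finset (fI P K)), γ) ∈
          (γ.powerset ×ˢ γ.powerset).filter fun q =>
            q.1.Nonempty ∧ q.2.Nonempty ∧ q.1 ∪ q.2 = γ := by
        simp only [Finset.mem_filter, Finset.mem_product, Finset.mem_powerset]
        refine ⟨⟨Finset.singleton_subset_iff.mpr ha, le_refl γ⟩,
          Finset.singleton_nonempty a, hγ, Finset.union_eq_right.mpr
            (Finset.singleton_subset_iff.mpr ha)⟩
      refine le_trans ?_ (Finset.le_sup hmem)
      simp [fPIL.sem]
  · intro K _ γ _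
    rw [DMA.sup_inf_powerset, DMA.compl_finset_sup]
end

section
/- For every fPIL formula φ over a finite set of ports P, the fPCL negation of φ coincides with the closure of the fPIL negation of φ: ¬φ ≡ ~(!φ) as fPCL formulas. -/
lemma compl_finset_inf {K : Type} [DeMorganAlg K] {α : Type} (f : α → K)
    (γ : Finset α) (hγ : γ.Nonempty) :
    DeMorganAlg.compl (γ.inf f) = γ.sup (fun a => DeMorganAlg.compl (f a)) := by
  induction hγ using Finset.Nonempty.cons_induction with
  | singleton a => simp
  | cons a s ha hs ih =>
      rw [Finset.inf_cons, Finset.sup_cons, DeMorganAlg.compl_inf, ih]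

/-- the fPCL negation of an fPIL formula coincides with the
closure of its fPIL negation: `¬φ ≡ ~(!φ)` as fPCL formulas. -/
theorem fpcl_neg_eq_closure_fnot {P : Type} [Fintype P] (φ : fPIL P) :
    pclEquiv (.cneg (.pil φ)) (fPCL.closure (.pil (.fnot φ))) := by
  intro K _ γ hγ
  show DeMorganAlg.compl (γ.inf fun a => φ.sem a) = _
  rw [compl_finset_inf _ _ hγ]
  unfold fPCL.closure
  show _ = Finset.sup _ _
  apply le_antisymm
  · apply Finset.sup_le
    intro a ha
    have hmem : (({a} : Finset (fI P K)), γ) ∈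
        ((γ.powerset ×ˢ γ.powerset).filter fun q =>
          q.1.Nonempty ∧ q.2.Nonempty ∧ q.1 ∪ q.2 = γ) := by
      simp [Finset.mem_filter, Finset.mem_product, Finset.singleton_subset_iff, ha,
        hγ, Finset.union_eq_right.mpr (Finset.singleton_subset_iff.mpr ha)]
    calc DeMorganAlg.compl (φ.sem a)
        = fPCL.sem (P := P) (.pil (.fnot φ)) ({a} : Finset (fI P K)) ⊓
          fPCL.sem (P := P) (.pil .tt) γ := by
          simp [fPCL.sem, fPIL.sem]
      _ ≤ _ := Finset.le_sup (f := fun q => fPCL.sem (P := P) (.pil (.fnot φ)) q.1 ⊓ fPCL.sem (P := P) (.pil .tt) q.2) hmem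
  · apply Finset.sup_le
    intro q hq
    simp only [Finset.mem_filter, Finset.mem_product, Finset.mem_powerset] at hq
    obtain ⟨⟨h1, _⟩, hne1, _, _⟩ := hq
    obtain ⟨a, ha⟩ := hne1
    calc fPCL.sem (P := P) (.pil (.fnot φ)) q.1 ⊓ fPCL.sem (P := P) (.pil .tt) q.2
        ≤ fPCL.sem (P := P) (.pil (.fnot φ)) q.1 := inf_le_left
      _ ≤ DeMorganAlg.compl (φ.sem a) := Finset.inf_le ha
      _ ≤ _ := Finset.le_sup (f := fun a => DeMorganAlg.compl (φ.sem a)) (h1 ha)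
end

section
/- Let J be a finite nonempty index set, φ_j an fPIL formula over a finite set of ports P for each j ∈ J, K a De Morgan algebra, and γ ∈ fC(P,K). Then ‖⋁f_{j∈J} φ_j‖(γ) = ⋁_{J' ⊆ J} ⋁ (⋀_{j'∈J'} ‖φ_{j'}‖(γ_{j'})), where the inner join ranges over all families (γ_{j'})_{j'∈J'} of pairwise disjoint nonempty subsets of γ whose (disjoint) union equals γ. -/
/-- Iterated fuzzy disjunction `⋁f_{j∈Fin (n+1)} φ j` of fPIL formulas over the
finite nonempty index set `Fin (n+1)`. -/
def fPIL.bigDisj {P : Type} : (n : ℕ) → (Fin (n + 1) → fPIL P) → fPIL P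
  | 0, φ => φ 0
  | n + 1, φ => .fdisj (fPIL.bigDisj n fun i => φ i.castSucc) (φ (Fin.last (n + 1)))

/-- Iterated fuzzy conjunction `⋀f_{j∈Fin (n+1)} φ j` of fPIL formulas. -/
def fPIL.bigConj {P : Type} : (n : ℕ) → (Fin (n + 1) → fPIL P) → fPIL P
  | 0, φ => φ 0
  | n + 1, φ => fPIL.fconj (fPIL.bigConj n fun i => φ i.castSucc) (φ (Fin.last (n + 1)))

/-- Iterated coalescing `⊎_{j∈Fin (n+1)} ζ j` of fPCL formulas. -/
def fPCL.bigCoal {P : Type} : (n : ℕ) → (Fin (n + 1) → fPCL P) → fPCL P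
  | 0, ζ => ζ 0
  | n + 1, ζ => .coal (fPCL.bigCoal n fun i => ζ i.castSucc) (ζ (Fin.last (n + 1)))

/-- Iterated fuzzy conjunction `⊗_{j∈Fin (n+1)} ζ j` of fPCL formulas. -/
def fPCL.bigOtimes {P : Type} : (n : ℕ) → (Fin (n + 1) → fPCL P) → fPCL P
  | 0, ζ => ζ 0
  | n + 1, ζ => (fPCL.bigOtimes n fun i => ζ i.castSucc).otimes (ζ (Fin.last (n + 1)))

/-- Iterated fuzzy disjunction `⊕_{j∈Fin (n+1)} ζ j` of fPCL formulas. -/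
def fPCL.bigOplus {P : Type} : (n : ℕ) → (Fin (n + 1) → fPCL P) → fPCL P
  | 0, ζ => ζ 0
  | n + 1, ζ => .oplus (fPCL.bigOplus n fun i => ζ i.castSucc) (ζ (Fin.last (n + 1)))

lemma bigDisj_sem_eq_sup {P K : Type} [DeMorganAlg K] :
    ∀ (n : ℕ) (φ : Fin (n + 1) → fPIL P) (a : fI P K),
      (fPIL.bigDisj n φ).sem a = (Finset.univ : Finset (Fin (n + 1))).sup fun j => (φ j).sem a
  | 0, φ, a => by
    simp [fPIL.bigDisj, Finset.sup_singleton, show (Finset.univ : Finset (Fin 1)) = {0} from rfl]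
  | n + 1, φ, a => by
    rw [fPIL.bigDisj, fPIL.sem, bigDisj_sem_eq_sup n]
    conv_rhs => rw [Fin.univ_castSuccEmb, Finset.sup_cons, Finset.sup_map]
    rw [sup_comm]
    rfl

set_option maxHeartbeats 2000000 in
/-- for a finite nonempty index set `J = Fin (n+1)`, fPIL formulas
`φ j`, a De Morgan algebra `K` and `γ ∈ fC(P,K)`,
`‖⋁f_{j∈J} φ_j‖(γ) = ⋁_{J' ⊆ J} ⋁ (⋀_{j'∈J'} ‖φ_{j'}‖(γ_{j'}))`, the inner join
ranging over all families of pairwise disjoint nonempty subsets of `γ` whose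
(disjoint) union equals `γ`. -/
theorem fpil_bigDisj_sem {P : Type} [Fintype P] (n : ℕ) (φ : Fin (n + 1) → fPIL P)
    (K : Type) [DeMorganAlg K] (γ : Finset (fI P K)) (hγ : γ.Nonempty) :
    fPCL.sem (.pil (fPIL.bigDisj n φ)) γ =
      (Finset.univ : Finset (Fin (n + 1))).powerset.sup fun J' =>
        ((Fintype.piFinset fun _ : Fin (n + 1) => γ.powerset).filter fun g =>
            (∀ j ∈ J', (g j).Nonempty) ∧
            (∀ j ∈ J', ∀ j' ∈ J', j ≠ j' → g j ∩ g j' = ∅) ∧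
            J'.sup g = γ).sup fun g =>
          J'.inf fun j => fPCL.sem (.pil (φ j)) (g j) := by
  classical
  have hsem : fPCL.sem (.pil (fPIL.bigDisj n φ)) γ =
      γ.inf fun a => (Finset.univ : Finset (Fin (n + 1))).sup fun j => (φ j).sem a := by
    show γ.inf _ = _
    exact Finset.inf_congr rfl fun a _ => bigDisj_sem_eq_sup n φ a
  rw [hsem]
  apply le_antisymm
  · rw [Finset.inf_sup]
    apply Finset.sup_le
    intro p hp
    set f : fI P K → Fin (n + 1) := fun a => if h : a ∈ γ then p a h else 0 with hf
    set g : Fin (n + 1) → Finset (fI P K) := fun j => γ.filter fun a => f a = j with hg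
    set J' : Finset (Fin (n + 1)) := Finset.univ.filter fun j => (g j).Nonempty with hJ'
    have hgj : ∀ j, g j ⊆ γ := fun j => Finset.filter_subset _ _
    refine le_trans ?_ (Finset.le_sup (f := fun J' =>
      ((Fintype.piFinset fun _ : Fin (n + 1) => γ.powerset).filter fun g =>
            (∀ j ∈ J', (g j).Nonempty) ∧
            (∀ j ∈ J', ∀ j' ∈ J', j ≠ j' → g j ∩ g j' = ∅) ∧
            J'.sup g = γ).sup fun g =>
          J'.inf fun j => fPCL.sem (.pil (φ j)) (g j))
      (Finset.mem_powerset.2 (Finset.subset_univ J')))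
    have hmem : g ∈ (Fintype.piFinset fun _ : Fin (n + 1) => γ.powerset).filter fun g =>
        (∀ j ∈ J', (g j).Nonempty) ∧
        (∀ j ∈ J', ∀ j' ∈ J', j ≠ j' → g j ∩ g j' = ∅) ∧
        J'.sup g = γ := by
      refine Finset.mem_filter.2 ⟨Fintype.mem_piFinset.2 fun j => Finset.mem_powerset.2 (hgj j),
        fun j hj => (Finset.mem_filter.1 hj).2, ?_, ?_⟩
      · intro j _ j' _ hne
        ext a
        simp only [Finset.mem_inter, Finset.notMem_empty, iff_false, not_and]
        intro haj haj'
        obtain ⟨_, e1⟩ := Finset.mem_filter.1 haj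
        obtain ⟨_, e2⟩ := Finset.mem_filter.1 haj'
        exact hne (e1 ▸ e2 ▸ rfl)
      · apply le_antisymm (Finset.sup_le fun j _ => hgj j)
        intro a ha
        have hag : a ∈ g (f a) := Finset.mem_filter.2 ⟨ha, rfl⟩
        have hfJ : f a ∈ J' := Finset.mem_filter.2 ⟨Finset.mem_univ _, ⟨a, hag⟩⟩
        exact Finset.mem_sup.2 ⟨f a, hfJ, hag⟩
    refine le_trans ?_ (Finset.le_sup hmem)
    apply Finset.le_inf
    intro j hj
    apply Finset.le_inf
    intro a ha
    obtain ⟨haγ, hfa⟩ := Finset.mem_filter.1 ha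
    have h1 : (⟨a, haγ⟩ : {x // x ∈ γ}) ∈ γ.attach := Finset.mem_attach _ _
    refine le_trans (Finset.inf_le h1) (le_of_eq ?_)
    have hpj : p a haγ = j := by rw [← hfa, hf]; simp [haγ]
    rw [hpj]
  · apply Finset.sup_le
    intro J' hJ'
    apply Finset.sup_le
    intro g hg
    obtain ⟨-, h1, h2, h3⟩ := Finset.mem_filter.1 hg
    apply Finset.le_inf
    intro a ha
    have haS : a ∈ J'.sup g := h3.symm ▸ ha
    obtain ⟨j, hj, haj⟩ := Finset.mem_sup.1 haS
    calc J'.inf (fun j => fPCL.sem (.pil (φ j)) (g j)) ≤ fPCL.sem (.pil (φ j)) (g j) :=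
          Finset.inf_le hj
      _ ≤ (φ j).sem a := Finset.inf_le haj
      _ ≤ _ := Finset.le_sup (f := fun j => (φ j).sem a) (Finset.mem_univ j)
end

section
/- Let J be a finite nonempty index set and φ_j an fPIL formula over a finite set of ports P for each j ∈ J. Then ⊎_{j∈J} φ_j ≡ (⊗_{j∈J} ~φ_j) ⊗ (⋁f_{j∈J} φ_j) as fPCL formulas. -/
open Finset in
lemma inf_univ_last' {α : Type*} [SemilatticeInf α] [OrderTop α] {n : ℕ} (f : Fin (n + 1) → α) :
    univ.inf f = (univ.inf fun i : Fin n => f i.castSucc) ⊓ f (Fin.last n) := by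
  rw [Fin.univ_castSuccEmb, inf_cons, inf_map, inf_comm]
  rfl

open Finset in
lemma sup_univ_last' {α : Type*} [SemilatticeSup α] [OrderBot α] {n : ℕ} (f : Fin (n + 1) → α) :
    univ.sup f = (univ.sup fun i : Fin n => f i.castSucc) ⊔ f (Fin.last n) := by
  rw [Fin.univ_castSuccEmb, sup_cons, sup_map, sup_comm]
  rfl

section AuxDM

open Finset

variable {P K : Type} [DeMorganAlg K]

lemma sem_otimes (ζ₁ ζ₂ : fPCL P) (γ : Finset (fI P K)) :
    (ζ₁.otimes ζ₂).sem γ = ζ₁.sem γ ⊓ ζ₂.sem γ := by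
  simp [fPCL.otimes, fPCL.sem, DeMorganAlg.compl_sup, DeMorganAlg.compl_compl]

lemma sem_pil_tt (γ : Finset (fI P K)) : (fPCL.pil (fPIL.tt : fPIL P)).sem γ = ⊤ := by
  simp [fPCL.sem, fPIL.sem]

lemma closure_sem (φ : fPIL P) (γ : Finset (fI P K)) (hγ : γ.Nonempty) :
    (fPCL.pil φ).closure.sem γ = γ.sup φ.sem := by
  apply le_antisymm
  · refine Finset.sup_le fun q hq => ?_
    simp only [mem_filter, mem_product, mem_powerset] at hq
    obtain ⟨⟨h1, _⟩, hne1, _, _⟩ := hq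
    obtain ⟨a, ha⟩ := hne1
    exact inf_le_left.trans ((Finset.inf_le ha).trans (Finset.le_sup (h1 ha)))
  · refine Finset.sup_le fun a ha => ?_
    have hmem : (({a}, γ) : Finset (fI P K) × Finset (fI P K)) ∈
        ((γ.powerset ×ˢ γ.powerset).filter fun q =>
          q.1.Nonempty ∧ q.2.Nonempty ∧ q.1 ∪ q.2 = γ) := by
      simp only [mem_filter, mem_product, mem_powerset]
      refine ⟨⟨singleton_subset_iff.mpr ha, subset_rfl⟩, singleton_nonempty a, hγ, ?_⟩
      exact union_eq_right.mpr (singleton_subset_iff.mpr ha)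
    refine le_trans ?_ (Finset.le_sup hmem)
    show _ ≤ fPCL.sem _ _ ⊓ fPCL.sem _ _
    simp [fPCL.sem, fPIL.sem]

lemma bigOtimes_sem (n : ℕ) (ζ : Fin (n + 1) → fPCL P) (γ : Finset (fI P K)) :
    (fPCL.bigOtimes n ζ).sem γ = univ.inf fun j => (ζ j).sem γ := by
  induction n with
  | zero => simp [fPCL.bigOtimes]
  | succ n ih =>
    rw [fPCL.bigOtimes, sem_otimes, ih, inf_univ_last' fun j => (ζ j).sem γ]

lemma bigDisj_sem (n : ℕ) (φ : Fin (n + 1) → fPIL P) (a : fI P K) :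
    (fPIL.bigDisj n φ).sem a = univ.sup fun j => (φ j).sem a := by
  induction n with
  | zero => simp [fPIL.bigDisj]
  | succ n ih =>
    rw [fPIL.bigDisj]
    show fPIL.sem _ a ⊔ fPIL.sem _ a = _
    rw [ih, sup_univ_last' fun j => (φ j).sem a]

/-- The finite set of covers of `γ` by `n+1` nonempty subsets. -/
noncomputable def covers (n : ℕ) (γ : Finset (fI P K)) :
    Finset (Fin (n + 1) → Finset (fI P K)) :=
  (Fintype.piFinset fun _ : Fin (n + 1) => γ.powerset).filter fun c =>
    (∀ j, (c j).Nonempty) ∧ univ.sup c = γ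

lemma mem_covers {n : ℕ} {γ : Finset (fI P K)} {c : Fin (n + 1) → Finset (fI P K)} :
    c ∈ covers n γ ↔ (∀ j, c j ⊆ γ) ∧ (∀ j, (c j).Nonempty) ∧ univ.sup c = γ := by
  simp [covers, Fintype.mem_piFinset]

lemma bigCoal_sem (n : ℕ) (ζ : Fin (n + 1) → fPCL P) (γ : Finset (fI P K))
    (hγ : γ.Nonempty) :
    (fPCL.bigCoal n ζ).sem γ =
      (covers n γ).sup fun c => univ.inf fun j => (ζ j).sem (c j) := by
  induction n generalizing γ with
  | zero =>
    apply le_antisymm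
    · have hc : (fun _ : Fin 1 => γ) ∈ covers 0 γ := by
        rw [mem_covers]
        exact ⟨fun _ => subset_rfl, fun _ => hγ, by simp⟩
      refine le_trans ?_ (Finset.le_sup hc)
      simp [fPCL.bigCoal]
    · refine Finset.sup_le fun c hc => ?_
      rw [mem_covers] at hc
      have h0 : c 0 = γ := by
        have := hc.2.2
        simpa using this
      simp [fPCL.bigCoal, h0]
  | succ n ih =>
    show ((γ.powerset ×ˢ γ.powerset).filter fun q =>
          q.1.Nonempty ∧ q.2.Nonempty ∧ q.1 ∪ q.2 = γ).sup (fun q =>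
        (fPCL.bigCoal n fun i => ζ i.castSucc).sem q.1 ⊓ (ζ (Fin.last (n + 1))).sem q.2) = _
    apply le_antisymm
    · refine Finset.sup_le fun q hq => ?_
      simp only [mem_filter, mem_product, mem_powerset] at hq
      obtain ⟨⟨hs1, hs2⟩, hne1, hne2, hu⟩ := hq
      rw [ih _ _ hne1, Finset.sup_inf_distrib_right]
      refine Finset.sup_le fun c' hc' => ?_
      rw [mem_covers] at hc'
      obtain ⟨hsub', hne', hcov'⟩ := hc'
      have hc : Fin.snoc c' q.2 ∈ covers (n + 1) γ := by
        rw [mem_covers]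
        refine ⟨?_, ?_, ?_⟩
        · intro j
          induction j using Fin.lastCases with
          | last => simpa [Fin.snoc_last] using hs2
          | cast i => simpa [Fin.snoc_castSucc] using (hsub' i).trans hs1
        · intro j
          induction j using Fin.lastCases with
          | last => simpa [Fin.snoc_last] using hne2
          | cast i => simpa [Fin.snoc_castSucc] using hne' i
        · rw [sup_univ_last' (Fin.snoc c' q.2)]
          simp only [Fin.snoc_castSucc, Fin.snoc_last]
          rw [hcov', Finset.sup_eq_union] at *
          exact hu
      refine le_trans (le_of_eq ?_) (Finset.le_sup hc)
      rw [inf_univ_last' (α := K) (n := n + 1)]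
      simp [Fin.snoc_castSucc, Fin.snoc_last]
    · refine Finset.sup_le fun c hc => ?_
      rw [mem_covers] at hc
      obtain ⟨hsub, hne, hcov⟩ := hc
      set γ₁ := univ.sup fun i : Fin (n + 1) => c i.castSucc with hγ₁
      set γ₂ := c (Fin.last (n + 1)) with hγ₂
      have hsubsup : ∀ i : Fin (n + 1), c i.castSucc ⊆ γ₁ := fun i =>
        Finset.le_sup (f := fun i : Fin (n + 1) => c i.castSucc) (mem_univ i)
      have hγ₁ne : γ₁.Nonempty := (hne (0 : Fin (n + 1)).castSucc).mono (hsubsup 0)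
      have hq : (γ₁, γ₂) ∈ (γ.powerset ×ˢ γ.powerset).filter fun q =>
          q.1.Nonempty ∧ q.2.Nonempty ∧ q.1 ∪ q.2 = γ := by
        simp only [mem_filter, mem_product, mem_powerset]
        refine ⟨⟨Finset.sup_le fun i _ => hsub i.castSucc, hsub _⟩, hγ₁ne, hne _, ?_⟩
        rw [← Finset.sup_eq_union, ← sup_univ_last' c, hcov]
      refine le_trans ?_ (Finset.le_sup hq)
      rw [inf_univ_last' fun j => (ζ j).sem (c j)]
      refine inf_le_inf ?_ le_rfl
      rw [ih _ _ hγ₁ne]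
      have hc' : (fun i : Fin (n + 1) => c i.castSucc) ∈ covers n γ₁ := by
        rw [mem_covers]
        exact ⟨hsubsup, fun i => hne _, rfl⟩
      exact Finset.le_sup
        (f := fun c => univ.inf fun j => (ζ j.castSucc).sem (c j)) hc'

lemma key_identity (n : ℕ) (f : Fin (n + 1) → fI P K → K) (γ : Finset (fI P K))
    (_hγ : γ.Nonempty) :
    ((covers n γ).sup fun c => univ.inf fun j => (c j).inf (f j)) =
      (univ.inf fun j => γ.sup (f j)) ⊓ (γ.inf fun a => univ.sup fun j => f j a) := by
  apply le_antisymm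
  · refine Finset.sup_le fun c hc => le_inf ?_ ?_
    · rw [mem_covers] at hc
      refine Finset.le_inf fun j _ => ?_
      obtain ⟨a, ha⟩ := hc.2.1 j
      exact (Finset.inf_le (mem_univ j)).trans
        ((Finset.inf_le ha).trans (Finset.le_sup (hc.1 j ha)))
    · rw [mem_covers] at hc
      refine Finset.le_inf fun a ha => ?_
      rw [← hc.2.2] at ha
      obtain ⟨j, _, hj⟩ := Finset.mem_sup.mp ha
      exact ((Finset.inf_le (mem_univ j)).trans (Finset.inf_le hj)).trans
        (Finset.le_sup (mem_univ j))
  · rw [Finset.inf_sup univ (fun _ : Fin (n + 1) => γ) f,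
      Finset.inf_sup γ (fun _ => (univ : Finset (Fin (n + 1)))) (fun a j => f j a),
      Finset.sup_inf_sup]
    refine Finset.sup_le fun q hq => ?_
    obtain ⟨hq1, hq2⟩ := mem_product.mp hq
    rw [Finset.mem_pi] at hq1 hq2
    set c : Fin (n + 1) → Finset (fI P K) := fun j =>
      insert (q.1 j (mem_univ j))
        ((γ.attach.filter fun a => q.2 a.1 a.2 = j).image Subtype.val) with hcdef
    have hcsub : ∀ j, c j ⊆ γ := by
      intro j x hx
      rcases Finset.mem_insert.mp hx with h | h
      · exact h ▸ hq1 j (mem_univ j)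
      · obtain ⟨⟨a, ha⟩, _, rfl⟩ := Finset.mem_image.mp h
        exact ha
    have hc : c ∈ covers n γ := by
      rw [mem_covers]
      refine ⟨hcsub, fun j => ⟨_, Finset.mem_insert_self _ _⟩, ?_⟩
      apply Finset.Subset.antisymm
      · intro x hx
        obtain ⟨j, _, hj⟩ := Finset.mem_sup.mp hx
        exact hcsub j hj
      · intro a ha
        refine Finset.mem_sup.mpr ⟨q.2 a ha, mem_univ _, ?_⟩
        refine Finset.mem_insert.mpr (Or.inr ?_)
        exact Finset.mem_image.mpr ⟨⟨a, ha⟩, Finset.mem_filter.mpr ⟨mem_attach _ _, rfl⟩, rfl⟩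
    refine le_trans ?_ (Finset.le_sup hc)
    refine Finset.le_inf fun j _ => Finset.le_inf fun a ha => ?_
    rcases Finset.mem_insert.mp ha with h | h
    · subst h
      exact inf_le_left.trans (Finset.inf_le (mem_attach _ ⟨j, mem_univ j⟩))
    · obtain ⟨⟨a', ha'⟩, hfa, rfl⟩ := Finset.mem_image.mp h
      have hga : q.2 a' ha' = j := (Finset.mem_filter.mp hfa).2
      exact inf_le_right.trans
        ((Finset.inf_le (mem_attach _ ⟨a', ha'⟩)).trans (le_of_eq (by rw [hga])))

end AuxDM

/-- for a finite nonempty index set `J = Fin (n+1)` and fPIL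
formulas `φ j`, `⊎_{j∈J} φ_j ≡ (⊗_{j∈J} ~φ_j) ⊗ (⋁f_{j∈J} φ_j)` as fPCL formulas. -/
theorem fpcl_bigCoal_eq {P : Type} [Fintype P] (n : ℕ) (φ : Fin (n + 1) → fPIL P) :
    pclEquiv (fPCL.bigCoal n fun j => .pil (φ j))
      ((fPCL.bigOtimes n fun j => (fPCL.pil (φ j)).closure).otimes
        (.pil (fPIL.bigDisj n φ))) := by
  intro K _ γ hγ
  rw [bigCoal_sem n _ γ hγ, sem_otimes, bigOtimes_sem]
  have hL : ((covers n γ).sup fun c =>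
      Finset.univ.inf fun j => (fPCL.pil (φ j)).sem (c j)) =
      (covers n γ).sup fun c => Finset.univ.inf fun j => (c j).inf ((φ j).sem) := rfl
  rw [hL, key_identity n (fun j => (φ j).sem) γ hγ]
  congr 1
  · exact Finset.inf_congr rfl fun j _ => (closure_sem (φ j) γ hγ).symm
  · show _ = γ.inf fun a => (fPIL.bigDisj n φ).sem a
    exact (Finset.inf_congr rfl fun a _ => (bigDisj_sem n φ a)).symm
end

section
/- Let J be a finite nonempty index set and φ_j an fPIL formula over a finite set of ports P for each j ∈ J. Then ⊗_{j∈J} (~φ_j) ≡ ~(⊎_{j∈J} φ_j) as fPCL formulas. -/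
lemma tt_sem {P K : Type} [DeMorganAlg K] (γ : Finset (fI P K)) :
    (fPCL.pil (.tt : fPIL P)).sem γ = ⊤ := by
  apply le_antisymm le_top
  exact Finset.le_inf fun a _ => le_top

lemma closure_sem_s16 {P K : Type} [DeMorganAlg K] (ζ : fPCL P) (γ : Finset (fI P K))
    (hγ : γ.Nonempty) :
    ζ.closure.sem γ = ((γ.powerset.filter fun t => t.Nonempty).sup fun t => ζ.sem t) := by
  apply le_antisymm
  · apply Finset.sup_le
    intro q hq
    simp only [Finset.mem_filter, Finset.mem_product, Finset.mem_powerset] at hq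
    obtain ⟨⟨h1, _⟩, hn1, _, _⟩ := hq
    calc ζ.sem q.1 ⊓ (fPCL.pil (.tt : fPIL P)).sem q.2 ≤ ζ.sem q.1 := inf_le_left
      _ ≤ _ := Finset.le_sup (by simp [Finset.mem_filter, Finset.mem_powerset, h1, hn1])
  · apply Finset.sup_le
    intro t ht
    simp only [Finset.mem_filter, Finset.mem_powerset] at ht
    have h : ζ.sem t = ζ.sem t ⊓ (fPCL.pil (.tt : fPIL P)).sem γ := by
      rw [tt_sem]; simp
    rw [h]
    exact Finset.le_sup (f := fun q : Finset (fI P K) × Finset (fI P K) =>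
        ζ.sem q.1 ⊓ (fPCL.pil (.tt : fPIL P)).sem q.2) (b := (t, γ))
      (by simp [Finset.mem_filter, Finset.mem_product, Finset.mem_powerset, ht.1, ht.2, hγ,
        Finset.union_eq_right.mpr ht.1])

lemma closure_otimes {P K : Type} [DeMorganAlg K] (ζ₁ ζ₂ : fPCL P)
    (γ : Finset (fI P K)) (hγ : γ.Nonempty) :
    (ζ₁.closure.otimes ζ₂.closure).sem γ = (fPCL.coal ζ₁ ζ₂).closure.sem γ := by
  rw [otimes_sem, closure_sem_s16 _ _ hγ, closure_sem_s16 _ _ hγ, closure_sem_s16 _ _ hγ]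
  rw [Finset.sup_inf_distrib_right]
  simp_rw [Finset.sup_inf_distrib_left]
  apply le_antisymm
  · apply Finset.sup_le; intro t₁ ht₁; apply Finset.sup_le; intro t₂ ht₂
    simp only [Finset.mem_filter, Finset.mem_powerset] at ht₁ ht₂
    have htu : t₁ ∪ t₂ ∈ γ.powerset.filter fun t => t.Nonempty := by
      simp [Finset.mem_filter, Finset.mem_powerset, Finset.union_subset ht₁.1 ht₂.1,
        Finset.Nonempty.inl ht₁.2]
    refine le_trans ?_ (Finset.le_sup htu)
    show ζ₁.sem t₁ ⊓ ζ₂.sem t₂ ≤ (fPCL.coal ζ₁ ζ₂).sem (t₁ ∪ t₂)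
    exact Finset.le_sup (f := fun q : Finset (fI P K) × Finset (fI P K) =>
        ζ₁.sem q.1 ⊓ ζ₂.sem q.2) (b := (t₁, t₂))
      (Finset.mem_filter.mpr ⟨Finset.mem_product.mpr
        ⟨Finset.mem_powerset.mpr Finset.subset_union_left,
         Finset.mem_powerset.mpr Finset.subset_union_right⟩, ht₁.2, ht₂.2, rfl⟩)
  · apply Finset.sup_le; intro t ht
    simp only [Finset.mem_filter, Finset.mem_powerset] at ht
    show (fPCL.coal ζ₁ ζ₂).sem t ≤ _
    apply Finset.sup_le
    intro q hq
    simp only [Finset.mem_filter, Finset.mem_product, Finset.mem_powerset] at hq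
    obtain ⟨⟨h1, h2⟩, hn1, hn2, _⟩ := hq
    have hm1 : q.1 ∈ γ.powerset.filter fun t => t.Nonempty := by
      simp [Finset.mem_filter, Finset.mem_powerset, h1.trans ht.1, hn1]
    have hm2 : q.2 ∈ γ.powerset.filter fun t => t.Nonempty := by
      simp [Finset.mem_filter, Finset.mem_powerset, h2.trans ht.1, hn2]
    refine le_trans ?_ (Finset.le_sup hm1)
    exact le_trans (le_refl _) (Finset.le_sup (f := fun t₂ => ζ₁.sem q.1 ⊓ ζ₂.sem t₂) hm2)

/-- for a finite nonempty index set `J = Fin (n+1)` and fPIL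
formulas `φ j`, `⊗_{j∈J} (~φ_j) ≡ ~(⊎_{j∈J} φ_j)` as fPCL formulas. -/
theorem fpcl_bigOtimes_closure {P : Type} [Fintype P] (n : ℕ) (φ : Fin (n + 1) → fPIL P) :
    pclEquiv (fPCL.bigOtimes n fun j => (fPCL.pil (φ j)).closure)
      (fPCL.closure (fPCL.bigCoal n fun j => .pil (φ j))) := by
  induction n with
  | zero => intro K _ γ hγ; rfl
  | succ n ih =>
    intro K _ γ hγ
    have h1 := ih (fun i => φ i.castSucc) K γ hγ
    calc (fPCL.bigOtimes (n+1) fun j => (fPCL.pil (φ j)).closure).sem γ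
        = (fPCL.bigOtimes n fun i => (fPCL.pil (φ i.castSucc)).closure).sem γ
          ⊓ ((fPCL.pil (φ (Fin.last (n+1)))).closure).sem γ := otimes_sem _ _ _
      _ = ((fPCL.bigCoal n fun i => fPCL.pil (φ i.castSucc)).closure).sem γ
          ⊓ ((fPCL.pil (φ (Fin.last (n+1)))).closure).sem γ := by rw [h1]
      _ = (((fPCL.bigCoal n fun i => fPCL.pil (φ i.castSucc)).closure).otimes
            ((fPCL.pil (φ (Fin.last (n+1)))).closure)).sem γ := (otimes_sem _ _ _).symm
      _ = ((fPCL.coal (fPCL.bigCoal n fun i => fPCL.pil (φ i.castSucc))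
            (fPCL.pil (φ (Fin.last (n+1))))).closure).sem γ := closure_otimes _ _ _ hγ
end
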